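/- Let φ: A → R be a flat ring morphism with A a principal ideal domain, and let Q be the intersection of some (non-empty) subset of the associated primes of R. Then the induced map A → R/Q is flat. In particular, A → R^red is flat. -/

import Mathlib

set_option synthInstance.maxHeartbeats 1000000
set_option maxHeartbeats 1000000

open TensorProduct LinearMap

/-- If `M` is flat over a domain `A`, scalar multiplication by a nonzero `a` is injective. -/
lemma flat_smul_injective (A M : Type*) [CommRing A] [IsDomain A] [AddCommGroup M]
    [Module A M] [Module.Flat A M] {a : A} (ha : a ≠ 0) :
    Function.Injective (fun m : M => a • m) := by
  have hf : Function.Injective (LinearMap.lsmul A A a) := fun x y h => by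
    simpa [LinearMap.lsmul_apply, smul_eq_mul] using mul_left_cancel₀ ha h
  have hinj := Module.Flat.rTensor_preserves_injective_linearMap
    (M := M) (LinearMap.lsmul A A a) hf
  have key : (fun m : M => a • m) =
      (TensorProduct.lid A M) ∘ (LinearMap.rTensor M (LinearMap.lsmul A A a)) ∘
        (TensorProduct.lid A M).symm := by
    funext m
    simp [TensorProduct.lid_symm_apply, LinearMap.rTensor_tmul, smul_tmul']
  rw [key]
  exact (TensorProduct.lid A M).injective.comp (hinj.comp (TensorProduct.lid A M).symm.injective)

/-- Over a PID, a torsion-free module is flat. -/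
lemma flat_of_smul_injective (A M : Type*) [CommRing A] [IsDomain A] [IsPrincipalIdealRing A]
    [AddCommGroup M] [Module A M]
    (h : ∀ a : A, a ≠ 0 → Function.Injective (fun m : M => a • m)) :
    Module.Flat A M := by
  rw [Module.Flat.iff_rTensor_injective']
  intro I
  obtain ⟨a, rfl⟩ := (IsPrincipalIdealRing.principal I).principal
  by_cases ha : a = 0
  · subst ha
    rw [Submodule.span_zero_singleton]
    intro x y _
    exact Subsingleton.elim x y
  · let e := LinearEquiv.toSpanNonzeroSingleton A A a ha
    have hcomp : (Submodule.span A {a}).subtype ∘ₗ e.toLinearMap =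
        LinearMap.toSpanSingleton A A a := by
      ext : 1
      simp only [LinearMap.coe_comp, Function.comp_apply, Submodule.coe_subtype,
        LinearMap.toSpanSingleton_apply, one_smul]
      exact congrArg Subtype.val (LinearEquiv.toSpanNonzeroSingleton_one A A a ha)
    have h1 : Function.Injective
        (LinearMap.rTensor M ((Submodule.span A {a}).subtype ∘ₗ e.toLinearMap)) := by
      rw [hcomp]
      have key : ⇑(LinearMap.rTensor M (LinearMap.toSpanSingleton A A a)) =
          (TensorProduct.lid A M).symm ∘ (fun m => a • m) ∘ (TensorProduct.lid A M) := by
        funext z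
        induction z with
        | zero => simp
        | tmul r m =>
          simp [LinearMap.rTensor_tmul, TensorProduct.lid_symm_apply, smul_tmul',
            TensorProduct.smul_tmul, mul_comm, smul_smul]
        | add x y hx hy => simp [map_add, hx, hy]
      rw [key]
      exact (TensorProduct.lid A M).symm.injective.comp
        ((h a ha).comp (TensorProduct.lid A M).injective)
    rw [LinearMap.rTensor_comp, LinearMap.coe_comp] at h1
    exact h1.of_comp_right (LinearMap.rTensor_surjective M e.surjective)


/-- Key: quotient by an ideal avoiding all torsion stays torsion-free. -/
lemma quot_smul_injective (A R : Type*) [CommRing A] [IsDomain A]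
    [CommRing R] [Algebra A R] [Module.Flat A R] (Q : Ideal R)
    (hQ : ∀ (a : A) (x : R), a ≠ 0 → algebraMap A R a * x ∈ Q → x ∈ Q)
    (a : A) (ha : a ≠ 0) :
    Function.Injective (fun z : R ⧸ Q => a • z) := by
  have key : ∀ z : R ⧸ Q, a • z = 0 → z = 0 := by
    intro z hz
    obtain ⟨x, rfl⟩ := Ideal.Quotient.mk_surjective z
    have hmk : (Ideal.Quotient.mk Q) x = Ideal.Quotient.mkₐ A Q x := rfl
    rw [hmk, ← map_smul, Ideal.Quotient.mkₐ_eq_mk, Ideal.Quotient.eq_zero_iff_mem,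
      Algebra.smul_def] at hz
    rw [hmk, Ideal.Quotient.mkₐ_eq_mk, Ideal.Quotient.eq_zero_iff_mem]
    exact hQ a x ha hz
  intro x y hxy
  have h0 : a • (x - y) = 0 := by
    simp only at hxy
    rw [smul_sub, hxy, sub_self]
  exact sub_eq_zero.mp (key _ h0)

/-- Let `φ : A → R` be a flat ring morphism with `A` a PID, and let `Q` be the intersection of a
non-empty set of associated primes of `R`. Then `A → R/Q` is flat; in particular `A → R^red`
is flat. -/
theorem stmt7 (A R : Type*) [CommRing A] [IsDomain A] [IsPrincipalIdealRing A]
    [CommRing R] [IsNoetherianRing R] [Algebra A R] [Module.Flat A R]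
    (S : Set (Ideal R)) (hne : S.Nonempty) (hass : S ⊆ associatedPrimes R R) :
    Module.Flat A (R ⧸ sInf S) ∧ Module.Flat A (R ⧸ nilradical R) := by
  -- the image of a nonzero element is a nonzerodivisor
  have hreg : ∀ (a : A), a ≠ 0 → ∀ x : R, algebraMap A R a * x = 0 → x = 0 := by
    intro a ha x hx
    have h1 : a • x = a • (0 : R) := by
      rw [Algebra.smul_def, hx, smul_zero]
    exact flat_smul_injective A R ha h1
  constructor
  · apply flat_of_smul_injective
    apply quot_smul_injective
    intro a x ha hx
    rw [Ideal.mem_sInf] at hx ⊢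
    intro P hP
    have hassP := hass hP
    have hprime : P.IsPrime := hassP.isPrime
    have hmem : algebraMap A R a * x ∈ P := hx hP
    have hnot : algebraMap A R a ∉ P := by
      intro hmemP
      obtain ⟨y, hy⟩ := (isAssociatedPrime_iff.mp hassP).2
      have hy0 : y ≠ 0 := by
        rintro rfl
        apply hprime.ne_top
        rw [hy, Submodule.bot_colon', Submodule.span_singleton_eq_bot.mpr rfl, Submodule.annihilator_bot]
      rw [hy, Submodule.mem_colon_singleton, Submodule.mem_bot] at hmemP
      rw [Algebra.smul_def] at hmemP
      exact hy0 (hreg a ha y hmemP)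
    exact (hprime.mem_or_mem hmem).resolve_left hnot
  · apply flat_of_smul_injective
    apply quot_smul_injective
    intro a x ha hx
    rw [mem_nilradical] at hx ⊢
    obtain ⟨n, hn⟩ := hx
    refine ⟨n, ?_⟩
    rw [mul_pow, ← map_pow] at hn
    exact hreg (a ^ n) (pow_ne_zero n ha) (x ^ n) hn
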